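/- Let Δ̃ be a real N×m matrix and λ > 0. As λ → ∞, the regularized Anderson coefficient vector α̃(λ) = (Δ̃ᵀΔ̃ + λI)⁻¹𝟏 / (𝟏ᵀ(Δ̃ᵀΔ̃ + λI)⁻¹𝟏) converges to the uniform vector (1/m)𝟏; quantitatively, ‖α̃(λ) - (1/m)𝟏‖ ≤ C·‖Δ̃‖²/λ for some constant C depending only on m once λ ≥ ‖Δ̃‖². -/

import Mathlib

open Matrix Filter
open scoped Matrix.Norms.L2Operator Topology RealInnerProductSpace

set_option maxHeartbeats 1000000

theorem raa_aux' {m : ℕ} (hm : 0 < m) (N : ℕ) (Δ : Matrix (Fin N) (Fin m) ℝ) (lam : ℝ)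
    (hΔ : ‖Δ‖ ^ 2 ≤ lam) (hlam : 0 < lam) :
    Real.sqrt (∑ i,
        (((1 / ((1 : Fin m → ℝ) ⬝ᵥ
            (Δᵀ * Δ + lam • (1 : Matrix (Fin m) (Fin m) ℝ))⁻¹.mulVec 1)) •
          (Δᵀ * Δ + lam • (1 : Matrix (Fin m) (Fin m) ℝ))⁻¹.mulVec 1) i
          - 1 / m) ^ 2) ≤ 8 * ‖Δ‖ ^ 2 / lam := by
  classical
  have hr0 : (0:ℝ) ≤ ‖Δ‖ ^ 2 := sq_nonneg _
  set r : ℝ := ‖Δ‖ ^ 2 with hrdef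
  set A : Matrix (Fin m) (Fin m) ℝ := Δᵀ * Δ with hAdef
  have hA : A.PosSemidef := by
    simpa [hAdef, conjTranspose_eq_transpose_of_trivial] using
      posSemidef_conjTranspose_mul_self Δ
  have hAnorm : ‖A‖ = r := by
    rw [hAdef, ← conjTranspose_eq_transpose_of_trivial, l2_opNorm_conjTranspose_mul_self,
      hrdef, sq]
  set B : Matrix (Fin m) (Fin m) ℝ := A + lam • 1 with hBdef
  have hB : B.PosDef := by
    refine Matrix.PosDef.posSemidef_add hA ?_
    rw [smul_one_eq_diagonal]
    exact posDef_diagonal_iff.mpr (fun _ => hlam)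
  set u : Fin m → ℝ := B⁻¹ *ᵥ (1 : Fin m → ℝ) with hudef
  have hBu : B *ᵥ u = 1 := by
    rw [hudef, mulVec_mulVec, mul_nonsing_inv _ (isUnit_iff_isUnit_det _ |>.mp hB.isUnit),
      one_mulVec]
  have hsum : A *ᵥ u + lam • u = 1 := by
    rw [← hBu, hBdef, add_mulVec, smul_mulVec, one_mulVec]
  set E : (Fin m → ℝ) → EuclideanSpace ℝ (Fin m) := ⇑(WithLp.equiv 2 (Fin m → ℝ)).symm with hEdef
  have hEnorm : ∀ x : Fin m → ℝ, ‖E x‖ = Real.sqrt (∑ i, x i ^ 2) := by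
    intro x
    rw [EuclideanSpace.norm_eq]
    simp [hEdef, WithLp.equiv_symm_apply, sq_abs]
  have hinner : ∀ x y : Fin m → ℝ, (inner ℝ (E x) (E y) : ℝ) = x ⬝ᵥ y := by
    intro x y
    simp [hEdef, PiLp.inner_apply, WithLp.equiv_symm_apply, dotProduct, RCLike.inner_apply,
      mul_comm]
  have hmulA : ∀ x : Fin m → ℝ, ‖E (A *ᵥ x)‖ ≤ r * ‖E x‖ := by
    intro x
    have := A.l2_opNorm_mulVec (E x)
    rw [hAnorm] at this
    exact this
  -- scalars
  set sm : ℝ := Real.sqrt m with hsmdef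
  have hsm2 : sm ^ 2 = m := Real.sq_sqrt (Nat.cast_nonneg m)
  have hsm1 : 1 ≤ sm := by
    rw [hsmdef]
    have h1m : (1:ℝ) ≤ m := by exact_mod_cast hm
    calc (1:ℝ) = Real.sqrt 1 := (Real.sqrt_one).symm
    _ ≤ Real.sqrt m := Real.sqrt_le_sqrt h1m
  have hsm0 : 0 < sm := lt_of_lt_of_le one_pos hsm1
  have h1norm : ‖E 1‖ = sm := by
    rw [hEnorm, hsmdef]
    simp
  -- quadratic identities
  have hqid : ∀ x : Fin m → ℝ, x ⬝ᵥ (B *ᵥ x) = x ⬝ᵥ (A *ᵥ x) + lam * (x ⬝ᵥ x) := by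
    intro x
    rw [hBdef, add_mulVec, smul_mulVec, one_mulVec, dotProduct_add, dotProduct_smul,
      smul_eq_mul]
  have hAq : 0 ≤ u ⬝ᵥ (A *ᵥ u) := by simpa using hA.dotProduct_mulVec_nonneg u
  set s : ℝ := (1 : Fin m → ℝ) ⬝ᵥ u with hsdef
  have hs1 : s = u ⬝ᵥ (A *ᵥ u) + lam * (u ⬝ᵥ u) := by
    rw [hsdef, ← hBu, dotProduct_comm, hqid]
  have huu : u ⬝ᵥ u = ‖E u‖ ^ 2 := by
    rw [hEnorm, Real.sq_sqrt (by positivity)]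
    simp [dotProduct, sq]
  -- upper bound on ‖E u‖
  have ha : lam * ‖E u‖ ^ 2 ≤ s := by rw [hs1]; nlinarith [hAq, huu]
  have hb : s ≤ sm * ‖E u‖ := by
    have h := real_inner_le_norm (E 1) (E u)
    rw [hinner, h1norm] at h
    rw [hsdef]; exact h
  have hEu_le : lam * ‖E u‖ ≤ sm := by
    rcases eq_or_lt_of_le (norm_nonneg (E u)) with h | h
    · rw [← h]; nlinarith
    · have h2 : lam * ‖E u‖ * ‖E u‖ ≤ sm * ‖E u‖ := by nlinarith
      exact le_of_mul_le_mul_right h2 h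
  -- lower bound on ‖E u‖
  have hlow : sm ≤ (r + lam) * ‖E u‖ := by
    have he : E (1 : Fin m → ℝ) = E (A *ᵥ u) + E (lam • u) := by
      rw [hEdef, WithLp.equiv_symm_apply, ← WithLp.toLp_add, hsum]
    have hsmul : ‖E (lam • u)‖ = lam * ‖E u‖ := by
      rw [hEdef]
      rw [WithLp.equiv_symm_apply, WithLp.toLp_smul]
      rw [norm_smul, Real.norm_eq_abs, abs_of_pos hlam]
    calc sm = ‖E (1 : Fin m → ℝ)‖ := h1norm.symm
    _ = ‖E (A *ᵥ u) + E (lam • u)‖ := by rw [he]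
    _ ≤ ‖E (A *ᵥ u)‖ + ‖E (lam • u)‖ := norm_add_le _ _
    _ ≤ r * ‖E u‖ + lam * ‖E u‖ := by rw [hsmul]; exact add_le_add_left (hmulA u) _
    _ = (r + lam) * ‖E u‖ := by ring
  have hEu_ge : sm / (2 * lam) ≤ ‖E u‖ := by
    rw [div_le_iff₀ (by positivity)]
    nlinarith [norm_nonneg (E u)]
  have hs_low : (m : ℝ) / (4 * lam) ≤ s := by
    have h4 : sm ≤ 2 * lam * ‖E u‖ := by
      rw [div_le_iff₀ (by positivity)] at hEu_ge; linarith
    have h2 : sm ^ 2 / (4 * lam) ≤ lam * ‖E u‖ ^ 2 := by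
      rw [div_le_iff₀ (by positivity)]
      nlinarith [h4, hsm0.le, norm_nonneg (E u), hlam]
    calc (m:ℝ) / (4 * lam) = sm ^ 2 / (4 * lam) := by rw [hsm2]
    _ ≤ lam * ‖E u‖ ^ 2 := h2
    _ ≤ s := ha
  have hs0 : 0 < s := lt_of_lt_of_le (by positivity) hs_low
  -- perturbation bound
  have hvd : ‖E (lam • u - 1)‖ ≤ r * sm / lam := by
    have heq : lam • u - 1 = -(A *ᵥ u) := by
      rw [← hsum]; abel
    have hEuub : ‖E u‖ ≤ sm / lam := by
      rw [le_div_iff₀ hlam]; nlinarith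
    calc ‖E (lam • u - 1)‖ = ‖E (A *ᵥ u)‖ := by
          rw [heq, hEdef, WithLp.equiv_symm_apply, WithLp.toLp_neg, norm_neg]
    _ ≤ r * ‖E u‖ := hmulA u
    _ ≤ r * (sm / lam) := by nlinarith
    _ = r * sm / lam := by ring
  -- denominator estimate
  have hm' : (0:ℝ) < m := by exact_mod_cast hm
  have h11 : (1 : Fin m → ℝ) ⬝ᵥ (1 : Fin m → ℝ) = m := by simp [dotProduct]
  have hms : |lam * s - m| ≤ m * r / lam := by
    have he : E (lam • u - 1) = E (lam • u) - E 1 := by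
      rw [hEdef, WithLp.equiv_symm_apply, WithLp.toLp_sub]
    have h2 : lam * s - m = (inner ℝ (E 1) (E (lam • u - 1)) : ℝ) := by
      rw [he, inner_sub_right, hinner, hinner, dotProduct_smul, smul_eq_mul, h11, hsdef]
    calc |lam * s - m| = |(inner ℝ (E 1) (E (lam • u - 1)) : ℝ)| := by rw [h2]
    _ ≤ ‖E (1 : Fin m → ℝ)‖ * ‖E (lam • u - 1)‖ := abs_real_inner_le_norm _ _
    _ ≤ sm * (r * sm / lam) := by
        rw [h1norm]
        exact mul_le_mul_of_nonneg_left hvd hsm0.le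
    _ = m * r / lam := by rw [← hsm2]; ring
  set t : ℝ := lam * s with htdef
  have ht0 : 0 < t := mul_pos hlam hs0
  have htlow : (m:ℝ)/4 ≤ t := by
    calc (m:ℝ)/4 = lam * ((m:ℝ)/(4*lam)) := by field_simp
    _ ≤ lam * s := mul_le_mul_of_nonneg_left hs_low hlam.le
  -- decomposition of the difference vector
  have hdecomp : (1/s) • u - (fun _ => 1/(m:ℝ) : Fin m → ℝ)
      = (1/t) • (lam • u - 1) + ((1/t) - 1/(m:ℝ)) • (1 : Fin m → ℝ) := by
    funext i
    simp only [Pi.sub_apply, Pi.add_apply, Pi.smul_apply, Pi.one_apply, smul_eq_mul, htdef]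
    field_simp
    try ring
  have hterm2 : |1/t - 1/(m:ℝ)| ≤ (m * r / lam) / (t * m) := by
    have he : 1/t - 1/(m:ℝ) = -((lam * s - m) / (t * m)) := by
      rw [htdef]; field_simp; try ring
    rw [he, abs_neg, abs_div, abs_of_pos (show (0:ℝ) < t * m by positivity)]
    gcongr
    all_goals exact hms
  have hnorm_le : ‖E ((1/s) • u - fun _ => 1/(m:ℝ))‖
      ≤ (1/t) * (r * sm / lam) + ((m * r / lam) / (t * m)) * sm := by
    rw [hdecomp]
    have hE : E ((1/t) • (lam • u - 1) + ((1/t) - 1/(m:ℝ)) • (1 : Fin m → ℝ))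
        = (1/t) • E (lam • u - 1) + ((1/t) - 1/(m:ℝ)) • E (1 : Fin m → ℝ) := by
      rw [hEdef, WithLp.equiv_symm_apply, WithLp.toLp_add, WithLp.toLp_smul, WithLp.toLp_smul]
    rw [hE]
    calc ‖(1/t) • E (lam • u - 1) + ((1/t) - 1/(m:ℝ)) • E (1 : Fin m → ℝ)‖
        ≤ ‖(1/t) • E (lam • u - 1)‖ + ‖((1/t) - 1/(m:ℝ)) • E (1 : Fin m → ℝ)‖ :=
          norm_add_le _ _
    _ = |1/t| * ‖E (lam • u - 1)‖ + |1/t - 1/(m:ℝ)| * ‖E (1 : Fin m → ℝ)‖ := by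
          rw [norm_smul, norm_smul, Real.norm_eq_abs, Real.norm_eq_abs]
    _ ≤ (1/t) * (r * sm / lam) + ((m * r / lam) / (t * m)) * sm := by
          rw [abs_of_pos (show (0:ℝ) < 1/t by positivity), h1norm]
          gcongr <;> first | exact hvd | exact hterm2
  have hfinal : (1/t) * (r * sm / lam) + ((m * r / lam) / (t * m)) * sm ≤ 8 * r / lam := by
    have e1 : ((m:ℝ) * r / lam) / (t * m) * sm = (r * sm) / (t * lam) := by
      field_simp; try ring
    have e2 : (1/t) * (r * sm / lam) = (r * sm) / (t * lam) := by
      field_simp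
    rw [e1, e2, ← add_div, div_le_div_iff₀ (by positivity) (by positivity)]
    have hsmm : sm ≤ (m:ℝ) := by nlinarith
    nlinarith [mul_nonneg (mul_nonneg hr0 hlam.le) (sub_nonneg.mpr htlow),
      mul_nonneg (mul_nonneg hr0 hlam.le) (sub_nonneg.mpr hsmm), ht0.le]
  have hgoal_eq : Real.sqrt (∑ i, (((1/s) • u) i - 1/(m:ℝ))^2)
      = ‖E ((1/s) • u - fun _ => 1/(m:ℝ))‖ := by
    rw [hEnorm]
    congr 1
    try refine Finset.sum_congr rfl fun i _ => ?_
    all_goals simp [Pi.sub_apply]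
  rw [hgoal_eq]
  exact le_trans hnorm_le hfinal

/-- As `λ → ∞`, the regularized Anderson coefficient vector
`α̃(λ) = (Δ̃ᵀΔ̃ + λI)⁻¹𝟏 / (𝟏ᵀ(Δ̃ᵀΔ̃ + λI)⁻¹𝟏)` tends to the uniform vector `(1/m)𝟏`;
quantitatively, `‖α̃(λ) - (1/m)𝟏‖ ≤ C·‖Δ̃‖²/λ` for a constant `C` depending only on `m`,
once `λ ≥ ‖Δ̃‖²`. -/
theorem raa_coefficients_tendsto_uniform
    {m : ℕ} (hm : 0 < m) :
    (∀ (N : ℕ) (Δ : Matrix (Fin N) (Fin m) ℝ),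
      Tendsto
        (fun lam : ℝ =>
          (1 / ((1 : Fin m → ℝ) ⬝ᵥ
              (Δᵀ * Δ + lam • (1 : Matrix (Fin m) (Fin m) ℝ))⁻¹.mulVec 1)) •
            (Δᵀ * Δ + lam • (1 : Matrix (Fin m) (Fin m) ℝ))⁻¹.mulVec 1)
        atTop (𝓝 fun _ => (1 : ℝ) / m)) ∧
    ∃ C : ℝ, 0 < C ∧
      ∀ (N : ℕ) (Δ : Matrix (Fin N) (Fin m) ℝ) (lam : ℝ),
        ‖Δ‖ ^ 2 ≤ lam → 0 < lam →
        Real.sqrt (∑ i,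
            (((1 / ((1 : Fin m → ℝ) ⬝ᵥ
                (Δᵀ * Δ + lam • (1 : Matrix (Fin m) (Fin m) ℝ))⁻¹.mulVec 1)) •
              (Δᵀ * Δ + lam • (1 : Matrix (Fin m) (Fin m) ℝ))⁻¹.mulVec 1) i
              - 1 / m) ^ 2) ≤ C * ‖Δ‖ ^ 2 / lam := by
  constructor
  · intro N Δ
    rw [← tendsto_sub_nhds_zero_iff]
    have hb : ∀ᶠ lam : ℝ in atTop,
        ‖(1 / ((1 : Fin m → ℝ) ⬝ᵥ
              (Δᵀ * Δ + lam • (1 : Matrix (Fin m) (Fin m) ℝ))⁻¹.mulVec 1)) •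
            (Δᵀ * Δ + lam • (1 : Matrix (Fin m) (Fin m) ℝ))⁻¹.mulVec 1
            - (fun _ => (1 : ℝ) / m)‖ ≤ 8 * (‖Δ‖ ^ 2 + 1) / lam := by
      filter_upwards [eventually_ge_atTop (‖Δ‖ ^ 2 + 1)] with lam hl
      have hl0 : (0:ℝ) < lam := lt_of_lt_of_le (by positivity) hl
      have key := raa_aux' hm N Δ lam (by nlinarith [sq_nonneg ‖Δ‖]) hl0
      set x : Fin m → ℝ := (1 / ((1 : Fin m → ℝ) ⬝ᵥ
              (Δᵀ * Δ + lam • (1 : Matrix (Fin m) (Fin m) ℝ))⁻¹.mulVec 1)) •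
            (Δᵀ * Δ + lam • (1 : Matrix (Fin m) (Fin m) ℝ))⁻¹.mulVec 1 with hxdef
      have h2 : (8:ℝ) * ‖Δ‖ ^ 2 / lam ≤ 8 * (‖Δ‖ ^ 2 + 1) / lam := by
        gcongr
        linarith
      rw [pi_norm_le_iff_of_nonneg (by positivity)]
      intro i
      have h1 : |x i - 1 / (m:ℝ)| ≤ Real.sqrt (∑ j, (x j - 1 / (m:ℝ)) ^ 2) := by
        rw [← Real.sqrt_sq_eq_abs]
        exact Real.sqrt_le_sqrt (Finset.single_le_sum
          (f := fun j => (x j - 1 / (m:ℝ)) ^ 2) (fun j _ => sq_nonneg _) (Finset.mem_univ i))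
      simp only [Pi.sub_apply, Real.norm_eq_abs]
      calc |x i - 1 / (m:ℝ)|
          ≤ Real.sqrt (∑ j, (x j - 1 / (m:ℝ)) ^ 2) := h1
      _ ≤ 8 * ‖Δ‖ ^ 2 / lam := key
      _ ≤ 8 * (‖Δ‖ ^ 2 + 1) / lam := h2
    exact squeeze_zero_norm' hb (Tendsto.div_atTop tendsto_const_nhds tendsto_id)
  · exact ⟨8, by norm_num, fun N Δ lam h1 h2 => raa_aux' hm N Δ lam h1 h2⟩
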